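/- Let {P_n} be the monic orthogonal polynomial sequence of a regular functional 𝒰 and fix m ≥ 0. Define η_{n,m,ω} = (n+1)(n+2)···(n+m) and the monic polynomials P_n^{[m,ω]}(x) = D_ω^m P_{n+m}(x)/η_{n,m,ω}. If {𝔢_n} is the dual basis of {P_n^{[m,ω]}} and {𝔭_n} the dual basis of {P_n}, then D_{-ω}^m 𝔢_n = (-1)^m η_{n,m,ω} 𝔭_{n+m} for all n ≥ 0. -/

import Mathlib

open Polynomial Finset

noncomputable def Dw (ω : ℂ) : Polynomial ℂ →ₗ[ℂ] Polynomial ℂ where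
  toFun p := C ω⁻¹ * (p.comp (X + C ω) - p)
  map_add' p r := by
    ext n
    simp [add_comp, coeff_C_mul, coeff_sub, coeff_add]
    ring
  map_smul' c p := by
    ext n
    simp [smul_comp, coeff_C_mul, coeff_smul, coeff_sub, smul_eq_mul]
    ring

noncomputable def Dq (q : ℂ) : Polynomial ℂ →ₗ[ℂ] Polynomial ℂ where
  toFun p := C (q-1)⁻¹ * (p.comp (C q * X) - p).divX
  map_add' p r := by
    ext n
    simp [add_comp, coeff_divX, coeff_C_mul, coeff_sub, coeff_add]
    ring
  map_smul' c p := by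
    ext n
    simp [smul_comp, coeff_divX, coeff_C_mul, coeff_smul, coeff_sub, smul_eq_mul]
    ring

noncomputable def mulF (π : Polynomial ℂ) (U : Polynomial ℂ →ₗ[ℂ] ℂ) : Polynomial ℂ →ₗ[ℂ] ℂ :=
  U ∘ₗ (LinearMap.mulLeft ℂ π)

noncomputable def DwF (ω : ℂ) (U : Polynomial ℂ →ₗ[ℂ] ℂ) : Polynomial ℂ →ₗ[ℂ] ℂ :=
  -(U ∘ₗ Dw (-ω))

noncomputable def DqF (q : ℂ) (U : Polynomial ℂ →ₗ[ℂ] ℂ) : Polynomial ℂ →ₗ[ℂ] ℂ :=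
  -(U ∘ₗ Dq q⁻¹)

/-- η_{n,m,ω} = (n+1)_m = (n+1)(n+2)⋯(n+m). -/
noncomputable def etaW (m n : ℕ) : ℂ := ∏ k ∈ Finset.range m, ((n : ℂ) + 1 + k)

lemma etaW_ne_zero (m n : ℕ) : etaW m n ≠ 0 := by
  unfold etaW
  apply Finset.prod_ne_zero_iff.mpr
  intro k _
  have : ((n : ℂ) + 1 + k) = ((n + 1 + k : ℕ) : ℂ) := by push_cast; ring
  rw [this]
  exact Nat.cast_ne_zero.mpr (by omega)

lemma Dw_degree_lt (ω : ℂ) (p : Polynomial ℂ) (hp : p ≠ 0) :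
    (Dw ω p).degree < p.degree := by
  have hcomp_nd : (p.comp (X + C ω)).natDegree = p.natDegree := by
    rw [natDegree_comp, natDegree_X_add_C, mul_one]
  have hcomp_lc : (p.comp (X + C ω)).leadingCoeff = p.leadingCoeff := by
    rw [leadingCoeff_comp (by rw [natDegree_X_add_C]; exact one_ne_zero)]
    simp [(monic_X_add_C ω).leadingCoeff]
  have hcomp_ne : p.comp (X + C ω) ≠ 0 := by
    intro h
    apply hp
    rw [← leadingCoeff_eq_zero, ← hcomp_lc, h, leadingCoeff_zero]
  have hdeq : (p.comp (X + C ω)).degree = p.degree := by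
    rw [degree_eq_natDegree hcomp_ne, degree_eq_natDegree hp, hcomp_nd]
  have hsub : (p.comp (X + C ω) - p).degree < p.degree := by
    have := degree_sub_lt hdeq hcomp_ne hcomp_lc
    rwa [hdeq] at this
  calc (Dw ω p).degree ≤ (p.comp (X + C ω) - p).degree := by
        show (C ω⁻¹ * _).degree ≤ _
        rcases eq_or_ne (ω⁻¹:ℂ) 0 with h0 | h0
        · simp [h0]
        · rw [degree_C_mul h0]
    _ < p.degree := hsub

lemma Dw_pow_eq_zero (ω : ℂ) : ∀ (m : ℕ) (p : Polynomial ℂ),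
    p.degree < (m : ℕ) → (Dw ω ^ m) p = 0 := by
  intro m
  induction m with
  | zero =>
    intro p hp
    have : p = 0 := by
      by_contra h
      rw [degree_eq_natDegree h] at hp
      exact absurd hp (by exact_mod_cast Nat.not_lt_zero _)
    simp [this]
  | succ m ih =>
    intro p hp
    rcases eq_or_ne p 0 with rfl | h
    · simp
    · rw [pow_succ, Module.End.mul_apply]
      apply ih
      have h1 : (Dw ω p).degree < p.degree := Dw_degree_lt ω p h
      have h2 : p.degree ≤ (m : ℕ) := by
        rw [degree_eq_natDegree h] at hp ⊢
        exact_mod_cast Nat.lt_succ_iff.mp (by exact_mod_cast hp)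
      exact lt_of_lt_of_le h1 h2

lemma ext_of_P (P : ℕ → Polynomial ℂ) (hmonic : ∀ n, (P n).Monic)
    (hdeg : ∀ n, (P n).natDegree = n) (f g : Polynomial ℂ →ₗ[ℂ] ℂ)
    (h : ∀ k, f (P k) = g (P k)) : f = g := by
  have key : ∀ N (p : Polynomial ℂ), p.natDegree ≤ N → f p = g p := by
    intro N
    induction N with
    | zero =>
      intro p hp
      have hP0 : P 0 = 1 := ((hmonic 0).natDegree_eq_zero).mp (hdeg 0)
      have hpe : p = (p.coeff 0) • P 0 := by
        rw [hP0, smul_eq_C_mul, mul_one]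
        exact Polynomial.eq_C_of_natDegree_le_zero hp
      rw [hpe, map_smul, map_smul, h]
    | succ N ih =>
      intro p hp
      set c := p.coeff (N+1) with hc
      have hqdeg : (p - C c * P (N+1)).natDegree ≤ N := by
        rw [Polynomial.natDegree_le_iff_coeff_eq_zero]
        intro k hk
        simp only [Polynomial.coeff_sub, Polynomial.coeff_C_mul]
        rcases eq_or_lt_of_le (Nat.succ_le_of_lt hk) with h1 | h1
        · rw [← h1]
          have hco : (P (N+1)).coeff (N+1) = 1 := by
            have := (hmonic (N+1)).coeff_natDegree
            rwa [hdeg] at this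
          rw [hco, mul_one, ← hc]; ring
        · rw [Polynomial.coeff_eq_zero_of_natDegree_lt (lt_of_le_of_lt hp h1),
              Polynomial.coeff_eq_zero_of_natDegree_lt (by rw [hdeg]; exact h1)]
          ring
      have hpe : p = (p - C c * P (N+1)) + c • P (N+1) := by
        rw [smul_eq_C_mul]; ring
      rw [hpe, map_add, map_add, map_smul, map_smul, ih _ hqdeg, h]
  exact LinearMap.ext fun p => key p.natDegree p le_rfl

lemma DwF_iterate (ω : ℂ) (m : ℕ) (U : Polynomial ℂ →ₗ[ℂ] ℂ) :
    (DwF (-ω))^[m] U = ((-1 : ℂ) ^ m) • (U ∘ₗ (Dw ω ^ m)) := by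
  induction m with
  | zero => simp; rfl
  | succ m ih =>
    rw [Function.iterate_succ_apply', ih]
    unfold DwF
    rw [neg_neg]
    ext p
    simp only [LinearMap.neg_apply, LinearMap.comp_apply, LinearMap.smul_apply,
      smul_eq_mul, pow_succ, Module.End.mul_apply]
    ring

/-- for the monic OPS {Pₙ} of a regular functional 𝒰 and the monic
polynomials Pₙ^{[m,ω]} = D_ω^m P_{n+m} / η_{n,m,ω}, the dual bases satisfy
D_{-ω}^m 𝔢ₙ = (-1)^m η_{n,m,ω} 𝔭_{n+m}. -/
theorem stmt11 (ω : ℂ) (hω : ω ≠ 0) (U : Polynomial ℂ →ₗ[ℂ] ℂ) (P : ℕ → Polynomial ℂ)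
    (hmonic : ∀ n, (P n).Monic) (hdeg : ∀ n, (P n).natDegree = n)
    (horth : ∀ n k, n ≠ k → U (P n * P k) = 0) (hreg : ∀ n, U (P n * P n) ≠ 0)
    (m : ℕ)
    (𝔭 𝔢 : ℕ → Polynomial ℂ →ₗ[ℂ] ℂ)
    (hdualP : ∀ n k, 𝔭 n (P k) = if n = k then 1 else 0)
    (hdualE : ∀ n k, 𝔢 n (C (etaW m k)⁻¹ * ((Dw ω ^ m) (P (k + m)))) = if n = k then 1 else 0)
    (n : ℕ) :
    (DwF (-ω))^[m] (𝔢 n) = ((-1) ^ m * etaW m n) • 𝔭 (n + m) := by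
  apply ext_of_P P hmonic hdeg
  intro k
  rw [DwF_iterate]
  simp only [LinearMap.smul_apply, LinearMap.comp_apply, smul_eq_mul, hdualP]
  rcases lt_or_ge k m with hk | hk
  · -- degree too small : both sides zero
    have hz : (Dw ω ^ m) (P k) = 0 := by
      apply Dw_pow_eq_zero
      have h : P k ≠ 0 := (hmonic k).ne_zero
      rw [degree_eq_natDegree h, hdeg]
      exact_mod_cast hk
    rw [hz, map_zero, mul_zero]
    have : ¬ (n + m = k) := by omega
    simp [this]
  · -- k = j + m
    obtain ⟨j, rfl⟩ : ∃ j, k = j + m := ⟨k - m, by omega⟩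
    have hη : etaW m j ≠ 0 := etaW_ne_zero m j
    have key : 𝔢 n ((Dw ω ^ m) (P (j + m))) = etaW m j * (if n = j then 1 else 0) := by
      have : (Dw ω ^ m) (P (j + m)) =
          (etaW m j) • (C (etaW m j)⁻¹ * (Dw ω ^ m) (P (j + m))) := by
        rw [smul_eq_C_mul, ← mul_assoc, ← C_mul, mul_inv_cancel₀ hη, C_1, one_mul]
      rw [this, map_smul, smul_eq_mul, hdualE]
    rw [key]
    have : (n + m = j + m) ↔ (n = j) := by omega
    by_cases hnj : n = j
    · subst hnj; simp
    · simp [hnj, this]
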